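/- Let T be a positive integer, let z_1,…,z_T ≥ 0 and h_1,…,h_T > 0 be real sequences, and let h_max = max_{t∈[T]} h_t. Let J ≥ 0 be an integer and let θ_0 > θ_1 > … > θ_J > θ_{J+1} = 0 be reals with θ_0 ≥ h_max. Define 𝒯_j = {t ∈ [T] : θ_{j−1} ≥ h_t > θ_j} for j ∈ {1,…,J} and 𝒯_{J+1} = {t ∈ [T] : θ_J ≥ h_t}. Then G1(z_{1:T}, h_{1:T}) ≤ (3/2) ∑_{j=1}^{J+1} ( √(θ_{j−1}) · ∑_{t∈𝒯_j} √(z_t) )^{2/3}. -/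

import Mathlib

open Finset

/-- `G1(z_{1:T}, h_{1:T}) = ∑_{t=1}^T √(z_t) / (∑_{s=1}^t √(z_s)/h_s)^{1/3}`,
where a summand with numerator `0` is interpreted as `0` (Lean's division by zero
convention handles this). -/
noncomputable def G1 (T : ℕ) (z h : ℕ → ℝ) : ℝ :=
  ∑ t ∈ Finset.Icc 1 T,
    Real.sqrt (z t) / (∑ s ∈ Finset.Icc 1 t, Real.sqrt (z s) / h s) ^ ((1 : ℝ) / 3)


lemma key_ineq (x y : ℝ) (hx : 0 ≤ x) (hxy : x ≤ y) :
    (y - x) / y ^ ((1:ℝ)/3) ≤ 3/2 * (y ^ ((2:ℝ)/3) - x ^ ((2:ℝ)/3)) := by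
  rcases eq_or_lt_of_le (hx.trans hxy) with hy | hy
  · have : x = 0 := le_antisymm (hxy.trans hy.symm.le) hx
    simp [← hy, this]
  · have hy3 : (0:ℝ) < y ^ ((1:ℝ)/3) := Real.rpow_pos_of_pos hy _
    rw [div_le_iff₀ hy3]
    have amgm : x ^ ((2:ℝ)/3) * y ^ ((1:ℝ)/3) ≤ (2/3) * x + (1/3) * y :=
      Real.geom_mean_le_arith_mean2_weighted (by norm_num) (by norm_num) hx (hx.trans hxy)
        (by norm_num)
    have hyy : y ^ ((2:ℝ)/3) * y ^ ((1:ℝ)/3) = y := by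
      rw [← Real.rpow_add hy]; norm_num
    nlinarith [amgm, hyy]

lemma sum_div_rpow_le (a : ℕ → ℝ) (S : Finset ℕ) (ha : ∀ t ∈ S, 0 ≤ a t) :
    ∑ t ∈ S, a t / (∑ s ∈ S.filter (· ≤ t), a s) ^ ((1:ℝ)/3)
      ≤ 3/2 * (∑ t ∈ S, a t) ^ ((2:ℝ)/3) := by
  induction S using Finset.induction_on_max with
  | empty => simp
  | insert m S hmax ih =>
    have hmS : m ∉ S := fun hm => lt_irrefl m (hmax m hm)
    have ham : 0 ≤ a m := ha m (mem_insert_self _ _)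
    have haS : ∀ t ∈ S, 0 ≤ a t := fun t ht => ha t (mem_insert_of_mem ht)
    have hA' : (0:ℝ) ≤ ∑ t ∈ S, a t := Finset.sum_nonneg haS
    rw [Finset.sum_insert hmS, Finset.sum_insert hmS]
    have hfm : (insert m S).filter (· ≤ m) = insert m S := by
      apply Finset.filter_true_of_mem
      intro x hx
      rcases Finset.mem_insert.mp hx with rfl | hx
      · exact le_refl x
      · exact (hmax x hx).le
    have hft : ∀ t ∈ S, (insert m S).filter (· ≤ t) = S.filter (· ≤ t) := by
      intro t ht
      rw [Finset.filter_insert, if_neg (by exact not_le.mpr (hmax t ht))]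
    have hsum2 : ∑ t ∈ S, a t / (∑ s ∈ (insert m S).filter (· ≤ t), a s) ^ ((1:ℝ)/3)
        = ∑ t ∈ S, a t / (∑ s ∈ S.filter (· ≤ t), a s) ^ ((1:ℝ)/3) := by
      apply Finset.sum_congr rfl
      intro t ht; rw [hft t ht]
    rw [hfm, hsum2, Finset.sum_insert hmS]
    have key := key_ineq (∑ t ∈ S, a t) (a m + ∑ t ∈ S, a t) hA' (by linarith)
    have := ih haS
    have h1 : a m / (a m + ∑ t ∈ S, a t) ^ ((1:ℝ)/3)
        ≤ 3/2 * ((a m + ∑ t ∈ S, a t) ^ ((2:ℝ)/3) - (∑ t ∈ S, a t) ^ ((2:ℝ)/3)) := by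
      have heq : a m + ∑ t ∈ S, a t - ∑ t ∈ S, a t = a m := by ring
      rw [heq] at key; exact key
    linarith

lemma bucket_bound (T : ℕ) (z h : ℕ → ℝ) 
    (hh : ∀ t ∈ Finset.Icc 1 T, 0 < h t)
    (c : ℝ) (S : Finset ℕ) (hS : S ⊆ Finset.Icc 1 T)
    (hSc : ∀ t ∈ S, h t ≤ c) :
    ∑ t ∈ S, Real.sqrt (z t) / (∑ s ∈ Finset.Icc 1 t, Real.sqrt (z s) / h s) ^ ((1:ℝ)/3)
      ≤ 3/2 * (Real.sqrt c * ∑ t ∈ S, Real.sqrt (z t)) ^ ((2:ℝ)/3) := by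
  rcases S.eq_empty_or_nonempty with rfl | ⟨t0, ht0⟩
  · simp [Real.zero_rpow (by norm_num : (2:ℝ)/3 ≠ 0)]
  have hc : 0 < c := lt_of_lt_of_le (hh t0 (hS ht0)) (hSc t0 ht0)
  have hc3 : (0:ℝ) < c ^ ((1:ℝ)/3) := Real.rpow_pos_of_pos hc _
  -- per-term bound
  have hterm : ∀ t ∈ S,
      Real.sqrt (z t) / (∑ s ∈ Finset.Icc 1 t, Real.sqrt (z s) / h s) ^ ((1:ℝ)/3)
        ≤ c ^ ((1:ℝ)/3) *
          (Real.sqrt (z t) / (∑ s ∈ S.filter (· ≤ t), Real.sqrt (z s)) ^ ((1:ℝ)/3)) := by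
    intro t ht
    set A := ∑ s ∈ S.filter (· ≤ t), Real.sqrt (z s) with hA
    set B := ∑ s ∈ Finset.Icc 1 t, Real.sqrt (z s) / h s with hB
    have htT : t ∈ Finset.Icc 1 T := hS ht
    have htT' := Finset.mem_Icc.mp htT
    have hsub : S.filter (· ≤ t) ⊆ Finset.Icc 1 t := by
      intro s hs
      have hs' := Finset.mem_filter.mp hs
      have := Finset.mem_Icc.mp (hS hs'.1)
      exact Finset.mem_Icc.mpr ⟨this.1, hs'.2⟩
    have hApos : 0 ≤ A := Finset.sum_nonneg fun s _ => Real.sqrt_nonneg _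
    have hBA : A / c ≤ B := by
      rw [hA, Finset.sum_div]
      calc ∑ s ∈ S.filter (· ≤ t), Real.sqrt (z s) / c
          ≤ ∑ s ∈ S.filter (· ≤ t), Real.sqrt (z s) / h s := by
            apply Finset.sum_le_sum
            intro s hs
            have hs' := Finset.mem_filter.mp hs
            have hhs := hh s (hS hs'.1)
            exact div_le_div_of_nonneg_left (Real.sqrt_nonneg _) hhs (hSc s hs'.1)
        _ ≤ B := Finset.sum_le_sum_of_subset_of_nonneg hsub (fun s hsmem _ => by
            have := Finset.mem_Icc.mp hsmem
            have hhs := hh s (Finset.mem_Icc.mpr ⟨this.1, this.2.trans htT'.2⟩)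
            positivity)
    rcases eq_or_lt_of_le hApos with hA0 | hApos'
    · have hzt : Real.sqrt (z t) = 0 := by
        have htf : t ∈ S.filter (· ≤ t) := Finset.mem_filter.mpr ⟨ht, le_refl t⟩
        have := (Finset.sum_eq_zero_iff_of_nonneg
          (fun s _ => Real.sqrt_nonneg (z s))).mp hA0.symm t htf
        exact this
      simp [hzt]
    · have hAc : 0 < A / c := div_pos hApos' hc
      have hBpos : 0 < B := lt_of_lt_of_le hAc hBA
      have hmono : (A / c) ^ ((1:ℝ)/3) ≤ B ^ ((1:ℝ)/3) :=
        Real.rpow_le_rpow hAc.le hBA (by norm_num)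
      have h1 : Real.sqrt (z t) / B ^ ((1:ℝ)/3) ≤ Real.sqrt (z t) / (A / c) ^ ((1:ℝ)/3) :=
        div_le_div_of_nonneg_left (Real.sqrt_nonneg _) (Real.rpow_pos_of_pos hAc _) hmono
      have h2 : (A / c) ^ ((1:ℝ)/3) = A ^ ((1:ℝ)/3) / c ^ ((1:ℝ)/3) :=
        Real.div_rpow hApos hc.le _
      calc Real.sqrt (z t) / B ^ ((1:ℝ)/3)
          ≤ Real.sqrt (z t) / (A / c) ^ ((1:ℝ)/3) := h1
        _ = c ^ ((1:ℝ)/3) * (Real.sqrt (z t) / A ^ ((1:ℝ)/3)) := by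
            rw [h2]; field_simp
  calc ∑ t ∈ S, Real.sqrt (z t) / (∑ s ∈ Finset.Icc 1 t, Real.sqrt (z s) / h s) ^ ((1:ℝ)/3)
      ≤ ∑ t ∈ S, c ^ ((1:ℝ)/3) *
          (Real.sqrt (z t) / (∑ s ∈ S.filter (· ≤ t), Real.sqrt (z s)) ^ ((1:ℝ)/3)) :=
        Finset.sum_le_sum hterm
    _ = c ^ ((1:ℝ)/3) * ∑ t ∈ S,
          Real.sqrt (z t) / (∑ s ∈ S.filter (· ≤ t), Real.sqrt (z s)) ^ ((1:ℝ)/3) := by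
        rw [Finset.mul_sum]
    _ ≤ c ^ ((1:ℝ)/3) * (3/2 * (∑ t ∈ S, Real.sqrt (z t)) ^ ((2:ℝ)/3)) := by
        apply mul_le_mul_of_nonneg_left _ hc3.le
        exact sum_div_rpow_le (fun s => Real.sqrt (z s)) S (fun s _ => Real.sqrt_nonneg _)
    _ = 3/2 * (Real.sqrt c * ∑ t ∈ S, Real.sqrt (z t)) ^ ((2:ℝ)/3) := by
        have hW : 0 ≤ ∑ t ∈ S, Real.sqrt (z t) :=
          Finset.sum_nonneg fun s _ => Real.sqrt_nonneg _
        rw [Real.mul_rpow (Real.sqrt_nonneg c) hW, Real.sqrt_eq_rpow,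
          ← Real.rpow_mul hc.le]
        norm_num
        ring
theorem stmt_1 (T : ℕ) (hT : 1 ≤ T) (z h : ℕ → ℝ)
    (hz : ∀ t ∈ Finset.Icc 1 T, 0 ≤ z t)
    (hh : ∀ t ∈ Finset.Icc 1 T, 0 < h t)
    (J : ℕ) (θ : ℕ → ℝ)
    (hθdec : ∀ j ≤ J, θ (j + 1) < θ j)
    (hθlast : θ (J + 1) = 0)
    (hθ0 : ∀ t ∈ Finset.Icc 1 T, h t ≤ θ 0) :
    G1 T z h ≤
      3 / 2 *
        ((∑ j ∈ Finset.Icc 1 J,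
            (Real.sqrt (θ (j - 1)) *
              ∑ t ∈ (Finset.Icc 1 T).filter (fun t => h t ≤ θ (j - 1) ∧ θ j < h t),
                Real.sqrt (z t)) ^ ((2 : ℝ) / 3))
          + (Real.sqrt (θ J) *
              ∑ t ∈ (Finset.Icc 1 T).filter (fun t => h t ≤ θ J),
                Real.sqrt (z t)) ^ ((2 : ℝ) / 3)) := by
  classical
  set Tj : ℕ → Finset ℕ :=
    fun j => (Finset.Icc 1 T).filter (fun t => θ j < h t ∧ h t ≤ θ (j - 1)) with hTj
  -- θ antitone
  have hmono : ∀ k ≤ J + 1, ∀ i ≤ k, θ k ≤ θ i := by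
    intro k
    induction k with
    | zero => intro _ i hi; interval_cases i; exact le_refl _
    | succ n ihn =>
      intro hk i hi
      rcases Nat.lt_or_ge i (n + 1) with hlt | hge
      · exact (hθdec n (by omega)).le.trans (ihn (by omega) i (by omega))
      · have : i = n + 1 := by omega
        subst this; exact le_refl _
  -- coverage
  have hcover : ∀ t ∈ Finset.Icc 1 T, ∃ j, j ∈ Finset.Icc 1 (J + 1) ∧ t ∈ Tj j := by
    intro t ht
    have hht := hh t ht
    have h0 := hθ0 t ht
    have hex : ∃ j, θ j < h t := ⟨J + 1, by rw [hθlast]; exact hht⟩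
    refine ⟨Nat.find hex, ?_, ?_⟩
    · have hjle : Nat.find hex ≤ J + 1 := Nat.find_min' hex (by rw [hθlast]; exact hht)
      have hj1 : 1 ≤ Nat.find hex := by
        rcases Nat.eq_zero_or_pos (Nat.find hex) with h0' | h0'
        · exfalso; have := Nat.find_spec hex; rw [h0'] at this; linarith
        · exact h0'
      exact Finset.mem_Icc.mpr ⟨hj1, hjle⟩
    · refine Finset.mem_filter.mpr ⟨ht, Nat.find_spec hex, ?_⟩
      have hj1 : 1 ≤ Nat.find hex := by
        rcases Nat.eq_zero_or_pos (Nat.find hex) with h0' | h0'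
        · exfalso; have := Nat.find_spec hex; rw [h0'] at this; linarith
        · exact h0'
      have := Nat.find_min hex (show Nat.find hex - 1 < Nat.find hex by omega)
      exact not_lt.mp this
  -- disjointness
  have hdisj : (↑(Finset.Icc 1 (J + 1)) : Set ℕ).PairwiseDisjoint Tj := by
    intro i hi j hj hne
    simp only [Finset.coe_Icc, Set.mem_Icc] at hi hj
    have key : ∀ i j : ℕ, 1 ≤ i → i < j → j ≤ J + 1 → Disjoint (Tj i) (Tj j) := by
      intro i j hi1 hij hjle
      rw [Finset.disjoint_left]
      intro t hti htj
      have hti' := (Finset.mem_filter.mp hti).2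
      have htj' := (Finset.mem_filter.mp htj).2
      have : θ (j - 1) ≤ θ i := hmono (j - 1) (by omega) i (by omega)
      linarith [hti'.1, htj'.2]
    rcases lt_or_gt_of_ne hne with hlt | hgt
    · exact key i j hi.1 hlt hj.2
    · exact (key j i hj.1 hgt hi.2).symm
  -- biUnion decomposition
  have hunion : Finset.Icc 1 T = (Finset.Icc 1 (J + 1)).biUnion Tj := by
    ext t
    simp only [Finset.mem_biUnion]
    constructor
    · exact hcover t
    · rintro ⟨j, _, htj⟩; exact (Finset.mem_filter.mp htj).1
  have step1 : G1 T z h ≤ ∑ j ∈ Finset.Icc 1 (J + 1),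
      3/2 * (Real.sqrt (θ (j - 1)) * ∑ t ∈ Tj j, Real.sqrt (z t)) ^ ((2:ℝ)/3) := by
    have : G1 T z h = ∑ j ∈ Finset.Icc 1 (J + 1), ∑ t ∈ Tj j,
        Real.sqrt (z t) / (∑ s ∈ Finset.Icc 1 t, Real.sqrt (z s) / h s) ^ ((1:ℝ)/3) := by
      rw [G1, hunion, Finset.sum_biUnion hdisj]
    rw [this]
    apply Finset.sum_le_sum
    intro j hj
    exact bucket_bound T z h hh (θ (j - 1)) (Tj j) (Finset.filter_subset _ _)
      (fun t ht => (Finset.mem_filter.mp ht).2.2)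
  refine step1.trans (le_of_eq ?_)
  have hset1 : ∀ j : ℕ, Tj j
      = (Finset.Icc 1 T).filter (fun t => h t ≤ θ (j - 1) ∧ θ j < h t) := by
    intro j
    simp only [hTj]
    apply Finset.filter_congr
    intro t ht
    exact ⟨fun hx => ⟨hx.2, hx.1⟩, fun hx => ⟨hx.2, hx.1⟩⟩
  have hset2 : Tj (J + 1) = (Finset.Icc 1 T).filter (fun t => h t ≤ θ J) := by
    simp only [hTj]
    apply Finset.filter_congr
    intro t ht
    have hpos : θ (J + 1) < h t := by rw [hθlast]; exact hh t ht
    simp only [Nat.add_sub_cancel]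
    exact ⟨fun hx => hx.2, fun hx => ⟨hpos, hx⟩⟩
  rw [← Finset.mul_sum, Finset.sum_Icc_succ_top (by omega : 1 ≤ J + 1), hset2]
  simp only [Nat.add_sub_cancel]
  congr 1
  congr 1
  apply Finset.sum_congr rfl
  intro j hj
  rw [hset1 j]
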